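/- Let G be a group with finite symmetric generating set S, and suppose the predicate P(u, x) := 'ℓ(ux) > ℓ(u)' is decidable for geodesic words u and generators x, and that G is recursively presented. Then the word problem for G is decidable. -/

import Mathlib

/-- Word length of `g` with respect to a generating set `S`. -/
noncomputable def wordLength {G : Type*} [Group G] (S : Set G) (g : G) : ℕ :=
  sInf {n | ∃ l : List G, (∀ x ∈ l, x ∈ S) ∧ l.length = n ∧ l.prod = g}

section AuxComput

open Computable

/-- A `List.foldl` with computable step function is computable. -/
theorem computable_foldl' {α σ : Type*} [Primcodable α] [Primcodable σ]
    {f : σ × α → σ} (hf : Computable f) (init : σ) :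
    Computable fun l : List α => l.foldl (fun s x => f (s, x)) init := by
  have key : ∀ (n : ℕ) (l : List α) (s : σ),
      (Nat.rec (motive := fun _ => List α × σ) (l, s)
        (fun _ ih => (ih.1.tail, Option.casesOn ih.1.head? ih.2 fun x => f (ih.2, x))) n)
      = (l.drop n, (l.take n).foldl (fun s x => f (s, x)) s) := by
    intro n
    induction n with
    | zero => intro l s; simp
    | succ n IH =>
      intro l s
      have hstep1 : (Nat.rec (motive := fun _ => List α × σ) (l, s)
          (fun _ ih => (ih.1.tail, Option.casesOn ih.1.head? ih.2 fun x => f (ih.2, x))) (n+1))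
          = ((Nat.rec (motive := fun _ => List α × σ) (l, s)
          (fun _ ih => (ih.1.tail, Option.casesOn ih.1.head? ih.2 fun x => f (ih.2, x))) n).1.tail,
            Option.casesOn (Nat.rec (motive := fun _ => List α × σ) (l, s)
          (fun _ ih => (ih.1.tail, Option.casesOn ih.1.head? ih.2 fun x => f (ih.2, x))) n).1.head?
            (Nat.rec (motive := fun _ => List α × σ) (l, s)
          (fun _ ih => (ih.1.tail, Option.casesOn ih.1.head? ih.2 fun x => f (ih.2, x))) n).2
            fun x => f ((Nat.rec (motive := fun _ => List α × σ) (l, s)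
          (fun _ ih => (ih.1.tail, Option.casesOn ih.1.head? ih.2 fun x => f (ih.2, x))) n).2, x)) :=
        rfl
      rw [hstep1, IH l s, List.tail_drop]
      have hh : (l.drop n).head? = l[n]? := by
        rw [List.head?_eq_getElem?, List.getElem?_drop, Nat.add_zero]
      rw [hh]
      cases hx : l[n]? with
      | none =>
        have htk : l.take (n+1) = l.take n := by rw [List.take_succ, hx]; simp
        rw [htk]
      | some x =>
        have htk : l.take (n+1) = l.take n ++ [x] := by rw [List.take_succ, hx]; rfl
        rw [htk, List.foldl_concat]
  have hstep : Computable fun z : List α × (ℕ × (List α × σ)) =>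
      ((z.2.2.1.tail : List α), Option.casesOn (motive := fun _ => σ) z.2.2.1.head? z.2.2.2
        fun x => f (z.2.2.2, x)) := by
    have s1 : Computable fun z : List α × (ℕ × (List α × σ)) => z.2.2.1 :=
      fst.comp (snd.comp snd)
    have s2 : Computable fun z : List α × (ℕ × (List α × σ)) => z.2.2.2 :=
      snd.comp (snd.comp snd)
    exact (Primrec.list_tail.to_comp.comp s1).pair
      (option_casesOn (Primrec.list_head?.to_comp.comp s1) s2
        (hf.comp ((s2.comp fst).pair snd)).to₂)
  have main : Computable fun l : List α =>
      (Nat.rec (motive := fun _ => List α × σ) (l, init)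
        (fun _ ih => (ih.1.tail, Option.casesOn ih.1.head? ih.2 fun x => f (ih.2, x)))
        l.length) :=
    Computable.nat_rec list_length (Computable.id.pair (const init)) hstep.to₂
  exact (snd.comp main).of_eq fun l => by
    rw [key l.length l init, List.take_length]

end AuxComput

theorem stmt_12 {G : Type*} [Group G] {k : ℕ} (ι : Fin k → G)
    (hsym : ∀ x ∈ Set.range ι, x⁻¹ ∈ Set.range ι)
    (hgen : Subgroup.closure (Set.range ι) = ⊤)
    -- recursively presented: the words representing the identity are r.e.
    (e : ℕ → List (Fin k)) (he : Computable e)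
    (he_spec : ∀ u : List (Fin k), (u.map ι).prod = 1 ↔ ∃ n, e n = u)
    -- an algorithm deciding, for geodesic u and generator x, whether ℓ(ux) > ℓ(u)
    (p : List (Fin k) × Fin k → Bool) (hp : Computable p)
    (hp_spec : ∀ (u : List (Fin k)) (x : Fin k),
        wordLength (Set.range ι) (u.map ι).prod = u.length →
        (p (u, x) = true ↔
          wordLength (Set.range ι) ((u.map ι).prod * ι x) >
            wordLength (Set.range ι) (u.map ι).prod)) :
    ∃ wp : List (Fin k) → Bool, Computable wp ∧
      ∀ u : List (Fin k), wp u = true ↔ (u.map ι).prod = 1 := by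
  classical
  -- inverse generator map
  have hinv0 : ∀ i : Fin k, ∃ j : Fin k, ι j = (ι i)⁻¹ := fun i => hsym (ι i) ⟨i, rfl⟩
  choose inv hinv using hinv0
  -- product over appends
  have hPapp : ∀ a b : List (Fin k), ((a ++ b).map ι).prod = (a.map ι).prod * (b.map ι).prod := by
    intro a b; simp
  have hPcat : ∀ (a : List (Fin k)) (x : Fin k),
      ((a ++ [x]).map ι).prod = (a.map ι).prod * ι x := by
    intro a x; simp
  -- basic word length facts
  have wl_le : ∀ u : List (Fin k), wordLength (Set.range ι) (u.map ι).prod ≤ u.length := by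
    intro u
    apply Nat.sInf_le
    exact ⟨u.map ι, fun x hx => by
        rcases List.mem_map.1 hx with ⟨i, _, rfl⟩; exact ⟨i, rfl⟩,
      by simp, rfl⟩
  have revinv_prod : ∀ u : List (Fin k),
      ((u.reverse.map inv).map ι).prod = ((u.map ι).prod)⁻¹ := by
    intro u
    induction u with
    | nil => simp
    | cons x t IH =>
      simp only [List.reverse_cons, List.map_append, List.map_cons, List.prod_append,
        List.map_nil, List.prod_cons, List.prod_nil, mul_one, mul_inv_rev]
      rw [IH, hinv]
  have exists_word : ∀ g : G, ∃ u : List (Fin k), (u.map ι).prod = g := by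
    intro g
    have hg : g ∈ Subgroup.closure (Set.range ι) := by rw [hgen]; trivial
    refine Subgroup.closure_induction ?_ ?_ ?_ ?_ hg
    · rintro x ⟨i, rfl⟩; exact ⟨[i], by simp⟩
    · exact ⟨[], by simp⟩
    · rintro x y _ _ ⟨u, rfl⟩ ⟨v, rfl⟩; exact ⟨u ++ v, by simp⟩
    · rintro x _ ⟨u, rfl⟩; exact ⟨u.reverse.map inv, revinv_prod u⟩
  have lift_word : ∀ l : List G, (∀ x ∈ l, x ∈ Set.range ι) →
      ∃ u : List (Fin k), u.map ι = l := by
    intro l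
    induction l with
    | nil => exact fun _ => ⟨[], rfl⟩
    | cons x t IH =>
      intro h
      rcases h x (by simp) with ⟨i, rfl⟩
      rcases IH (fun y hy => h y (by simp [hy])) with ⟨u, rfl⟩
      exact ⟨i :: u, rfl⟩
  have exists_geodesic : ∀ g : G,
      ∃ w : List (Fin k), (w.map ι).prod = g ∧ w.length = wordLength (Set.range ι) g := by
    intro g
    obtain ⟨u, hu⟩ := exists_word g
    have hne : {n | ∃ l : List G, (∀ x ∈ l, x ∈ Set.range ι) ∧ l.length = n ∧
        l.prod = g}.Nonempty :=
      ⟨u.length, u.map ι, fun x hx => by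
          rcases List.mem_map.1 hx with ⟨i, _, rfl⟩; exact ⟨i, rfl⟩,
        by simp, hu⟩
    obtain ⟨l, hl, hlen, hprod⟩ := Nat.sInf_mem hne
    obtain ⟨w, rfl⟩ := lift_word l hl
    exact ⟨w, hprod, by simpa [wordLength] using hlen⟩
  have subadd : ∀ g h : G, wordLength (Set.range ι) (g * h) ≤
      wordLength (Set.range ι) g + wordLength (Set.range ι) h := by
    intro g h
    obtain ⟨wg, hwg, hwgl⟩ := exists_geodesic g
    obtain ⟨wh, hwh, hwhl⟩ := exists_geodesic h
    have h1 := wl_le (wg ++ wh)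
    rw [hPapp, hwg, hwh, List.length_append, hwgl, hwhl] at h1
    exact h1
  have wl_one : wordLength (Set.range ι) (1 : G) = 0 := by
    have h1 := wl_le []
    simpa using h1
  -- geodesics
  have geo_nil : wordLength (Set.range ι) (([] : List (Fin k)).map ι).prod =
      ([] : List (Fin k)).length := by simpa using wl_one
  have prefix_geo : ∀ a b : List (Fin k),
      wordLength (Set.range ι) (((a ++ b).map ι).prod) = (a ++ b).length →
      wordLength (Set.range ι) ((a.map ι).prod) = a.length := by
    intro a b hab
    have h1 := wl_le a
    have h2 := wl_le b
    have h3 := subadd ((a.map ι).prod) ((b.map ι).prod)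
    rw [hPapp, List.length_append] at hab
    omega
  have geo_append : ∀ (u : List (Fin k)) (x : Fin k),
      wordLength (Set.range ι) ((u.map ι).prod) = u.length → p (u, x) = true →
      wordLength (Set.range ι) (((u ++ [x]).map ι).prod) = (u ++ [x]).length := by
    intro u x hu hpx
    have hgt := (hp_spec u x hu).1 hpx
    have hle := wl_le (u ++ [x])
    rw [hPcat] at hle ⊢
    rw [List.length_append, List.length_singleton] at hle ⊢
    omega
  have p_true_of_geo : ∀ (u : List (Fin k)) (x : Fin k),
      wordLength (Set.range ι) (((u ++ [x]).map ι).prod) = (u ++ [x]).length →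
      p (u, x) = true := by
    intro u x hux
    have hu := prefix_geo u [x] hux
    refine (hp_spec u x hu).2 ?_
    rw [hPcat, List.length_append, List.length_singleton] at hux
    omega
  -- the geodesic checker
  set geoB : List (Fin k) → Bool := fun w =>
    (w.foldl (fun s x => ((s.1 ++ [x], s.2 && p (s.1, x)) : List (Fin k) × Bool))
      ([], true)).2 with hgeoBdef
  have foldl_false : ∀ (w v : List (Fin k)),
      (w.foldl (fun s x => ((s.1 ++ [x], s.2 && p (s.1, x)) : List (Fin k) × Bool))
        (v, false)).2 = false := by
    intro w
    induction w with
    | nil => intro v; rfl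
    | cons x t IH => intro v; simpa using IH (v ++ [x])
  have geo_claim : ∀ (w v : List (Fin k)),
      wordLength (Set.range ι) ((v.map ι).prod) = v.length →
      ((w.foldl (fun s x => ((s.1 ++ [x], s.2 && p (s.1, x)) : List (Fin k) × Bool))
        (v, true)).2 = true ↔
        wordLength (Set.range ι) (((v ++ w).map ι).prod) = (v ++ w).length) := by
    intro w
    induction w with
    | nil => intro v hv; simpa using hv
    | cons x t IH =>
      intro v hv
      rcases hpx : p (v, x) with _ | _
      · simp only [List.foldl_cons, hpx, Bool.and_false]
        rw [foldl_false]
        constructor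
        · intro h; exact absurd h (by simp)
        · intro h
          have hpre : wordLength (Set.range ι) (((v ++ [x]).map ι).prod) =
              (v ++ [x]).length := by
            refine prefix_geo (v ++ [x]) t ?_
            rwa [List.append_assoc, List.singleton_append]
          have := p_true_of_geo v x hpre
          rw [hpx] at this; exact absurd this (by simp)
      · have hvx := geo_append v x hv hpx
        have hIH := IH (v ++ [x]) hvx
        simp only [List.foldl_cons, hpx, Bool.and_true]
        rw [hIH, List.append_assoc, List.singleton_append]
  have geoB_iff : ∀ w : List (Fin k), geoB w = true ↔
      wordLength (Set.range ι) ((w.map ι).prod) = w.length := by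
    intro w
    have := geo_claim w [] geo_nil
    simpa [hgeoBdef] using this
  -- the search function
  set qf : List (Fin k) × Fin k → ℕ → Option (List (Fin k)) := fun a m =>
    (Encodable.decode (α := ℕ × List (Fin k)) m).bind fun nw =>
      cond (decide (e nw.1 = (a.1 ++ [a.2]) ++ (nw.2.reverse.map inv)) && geoB nw.2)
        (some nw.2) none with hqfdef
  have qf_some : ∀ (a : List (Fin k) × Fin k) (m : ℕ) (w : List (Fin k)),
      qf a m = some w → (w.map ι).prod = (a.1.map ι).prod * ι a.2 ∧
        wordLength (Set.range ι) ((w.map ι).prod) = w.length := by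
    intro a m w hqm
    rw [hqfdef] at hqm
    simp only [Option.bind_eq_some_iff] at hqm
    obtain ⟨nw, _, hcond⟩ := hqm
    rcases hb : (decide (e nw.1 = (a.1 ++ [a.2]) ++ (nw.2.reverse.map inv)) && geoB nw.2)
      with _ | _
    · rw [hb] at hcond; exact absurd hcond (by simp)
    · rw [hb] at hcond
      simp only [cond_true, Option.some.injEq] at hcond
      subst hcond
      rw [Bool.and_eq_true, decide_eq_true_eq] at hb
      obtain ⟨heq, hgeo⟩ := hb
      have h1 : (((a.1 ++ [a.2]) ++ (nw.2.reverse.map inv)).map ι).prod = 1 :=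
        (he_spec _).2 ⟨nw.1, heq⟩
      rw [hPapp, hPcat, revinv_prod] at h1
      exact ⟨(mul_inv_eq_one.1 h1).symm, (geoB_iff nw.2).1 hgeo⟩
  have hdom : ∀ a : List (Fin k) × Fin k, (Nat.rfindOpt (qf a)).Dom := by
    intro a
    rw [Nat.rfindOpt_dom]
    obtain ⟨w, hw, hwl⟩ := exists_geodesic ((a.1.map ι).prod * ι a.2)
    have hwgeo : wordLength (Set.range ι) ((w.map ι).prod) = w.length := by
      rw [hw]; omega
    have hone : (((a.1 ++ [a.2]) ++ (w.reverse.map inv)).map ι).prod = 1 := by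
      rw [hPapp, hPcat, revinv_prod, hw]
      group
    obtain ⟨n, hn⟩ := (he_spec _).1 hone
    refine ⟨Encodable.encode ((n, w) : ℕ × List (Fin k)), w, ?_⟩
    have hb : (decide (e n = (a.1 ++ [a.2]) ++ (w.reverse.map inv)) && geoB w) = true := by
      rw [Bool.and_eq_true, decide_eq_true_eq]
      exact ⟨hn, (geoB_iff w).2 hwgeo⟩
    rw [hqfdef]
    simp only [Encodable.encodek, Option.bind_some]
    rw [hb, cond_true]
    rfl
  -- the step function
  set stepF : List (Fin k) × Fin k → List (Fin k) := fun a =>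
    cond (p a) (a.1 ++ [a.2]) ((Nat.rfindOpt (qf a)).get (hdom a)) with hstepFdef
  have step_spec : ∀ (v : List (Fin k)) (x : Fin k),
      wordLength (Set.range ι) ((v.map ι).prod) = v.length →
      wordLength (Set.range ι) (((stepF (v, x)).map ι).prod) = (stepF (v, x)).length ∧
        ((stepF (v, x)).map ι).prod = (v.map ι).prod * ι x := by
    intro v x hv
    simp only [hstepFdef]
    cases hpx : p (v, x) with
    | false =>
      simp only [cond_false]
      have hmem : ((Nat.rfindOpt (qf (v, x))).get (hdom (v, x))) ∈ Nat.rfindOpt (qf (v, x)) :=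
        Part.get_mem _
      obtain ⟨n, hn⟩ := Nat.rfindOpt_spec hmem
      have := qf_some (v, x) n _ hn
      exact ⟨this.2, this.1⟩
    | true =>
      simp only [cond_true]
      exact ⟨geo_append v x hv hpx, hPcat v x⟩
  -- the full procedure
  set procF : List (Fin k) → List (Fin k) := fun u =>
    u.foldl (fun v x => stepF (v, x)) [] with hprocFdef
  have proc_spec : ∀ u : List (Fin k),
      wordLength (Set.range ι) (((procF u).map ι).prod) = (procF u).length ∧
        ((procF u).map ι).prod = (u.map ι).prod := by
    intro u
    induction u using List.reverseRecOn with
    | nil => exact ⟨geo_nil, rfl⟩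
    | append_singleton u x IH =>
      have hfold : procF (u ++ [x]) = stepF (procF u, x) := by
        rw [hprocFdef]; simp [List.foldl_concat]
      rw [hfold, hPcat]
      obtain ⟨h1, h2⟩ := step_spec (procF u) x IH.1
      exact ⟨h1, by rw [h2, IH.2]⟩
  -- computability
  have hinvP : Primrec inv := Primrec.fin_app.comp (Primrec.const inv) Primrec.id
  have hgeoB : Computable geoB := by
    have hf : Computable fun z : (List (Fin k) × Bool) × Fin k =>
        ((z.1.1 ++ [z.2], z.1.2 && p (z.1.1, z.2)) : List (Fin k) × Bool) :=
      (Computable.list_concat.comp (Computable.fst.comp Computable.fst) Computable.snd).pair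
        ((Computable.cond (Computable.snd.comp Computable.fst)
          (hp.comp ((Computable.fst.comp Computable.fst).pair Computable.snd))
          (Computable.const false)).of_eq fun z => by cases hz : z.1.2 <;> simp [hz])
    exact Computable.snd.comp (computable_foldl' hf (([], true) : List (Fin k) × Bool))
  have hqf : Computable₂ qf := by
    have hdec : Computable fun z : (List (Fin k) × Fin k) × ℕ =>
        (Encodable.decode (α := ℕ × List (Fin k)) z.2) :=
      Computable.decode.comp Computable.snd
    have htarget : Computable fun z : ((List (Fin k) × Fin k) × ℕ) × (ℕ × List (Fin k)) =>
        ((z.1.1.1 ++ [z.1.1.2]) ++ (z.2.2.reverse.map inv)) := by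
      have h1 : Computable fun z : ((List (Fin k) × Fin k) × ℕ) × (ℕ × List (Fin k)) =>
          z.1.1.1 ++ [z.1.1.2] :=
        Computable.list_concat.comp (Computable.fst.comp (Computable.fst.comp Computable.fst))
          (Computable.snd.comp (Computable.fst.comp Computable.fst))
      have h2 : Computable fun z : ((List (Fin k) × Fin k) × ℕ) × (ℕ × List (Fin k)) =>
          z.2.2.reverse.map inv := by
        have hpr : Primrec fun z : ((List (Fin k) × Fin k) × ℕ) × (ℕ × List (Fin k)) =>
            z.2.2.reverse.map inv :=
          Primrec.list_map (Primrec.list_reverse.comp (Primrec.snd.comp Primrec.snd))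
            (hinvP.comp Primrec.snd).to₂
        exact hpr.to_comp
      exact Computable.list_append.comp h1 h2
    have hb : Computable fun z : ((List (Fin k) × Fin k) × ℕ) × (ℕ × List (Fin k)) =>
        (decide (e z.2.1 = (z.1.1.1 ++ [z.1.1.2]) ++ (z.2.2.reverse.map inv)) && geoB z.2.2) := by
      have heq : Computable fun z : ((List (Fin k) × Fin k) × ℕ) × (ℕ × List (Fin k)) =>
          decide (e z.2.1 = (z.1.1.1 ++ [z.1.1.2]) ++ (z.2.2.reverse.map inv)) :=
        Primrec.eq.decide.to_comp.comp (he.comp (Computable.fst.comp Computable.snd)) htarget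
      exact (Computable.cond heq (hgeoB.comp (Computable.snd.comp Computable.snd))
        (Computable.const false)).of_eq fun z => by
          cases hz : decide (e z.2.1 = (z.1.1.1 ++ [z.1.1.2]) ++ (z.2.2.reverse.map inv)) <;>
            simp [hz]
    refine Computable₂.mk ?_
    exact Computable.option_bind hdec
      ((Computable.cond hb (Computable.option_some.comp
          (Computable.snd.comp Computable.snd)) (Computable.const none)).to₂)
  have hsearch : Computable fun a : List (Fin k) × Fin k =>
      (Nat.rfindOpt (qf a)).get (hdom a) :=
    (Partrec.rfindOpt hqf).of_eq_tot fun a => Part.get_mem (hdom a)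
  have hstepF : Computable stepF :=
    Computable.cond hp (Computable.list_concat.comp Computable.fst Computable.snd) hsearch
  have hprocF : Computable procF := by
    have hcf := computable_foldl' (f := fun z : List (Fin k) × Fin k => stepF z) hstepF []
    exact hcf.of_eq fun l => rfl
  refine ⟨fun u => decide (procF u = []), ?_, ?_⟩
  · exact Primrec.eq.decide.to_comp.comp hprocF (Computable.const [])
  · intro u
    rw [decide_eq_true_eq]
    constructor
    · intro h
      have h2 := (proc_spec u).2
      rw [h] at h2
      simpa using h2.symm
    · intro h
      obtain ⟨h1, h2⟩ := proc_spec u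
      rw [h2, h, wl_one] at h1
      exact List.length_eq_zero_iff.1 h1.symm
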